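/- The iterated integral is a shuffle homomorphism: for words w₁, w₂ of one-forms that are iterated-integrable along a path, ∫(w₁ ⧢ w₂) = (∫ w₁)·(∫ w₂), where ∫ denotes Chen's iterated integral along a fixed path and ⧢ is the shuffle product. -/

import Mathlib

namespace IterIntShuffle

/-- The shuffle product of two words of one-forms. -/
noncomputable def sh : List (ℝ → ℂ) → List (ℝ → ℂ) → (List (ℝ → ℂ) →₀ ℂ)
  | [], w => Finsupp.single w 1
  | (a :: u), [] => Finsupp.single (a :: u) 1
  | (a :: u), (b :: v) =>
      Finsupp.mapDomain (a :: ·) (sh u (b :: v)) +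
      Finsupp.mapDomain (b :: ·) (sh (a :: u) v)
termination_by u v => u.length + v.length

/-- Chen's iterated integral of a word of one-forms (pulled back to the interval) :
`∫₀^t 𝟏 = 1` and `∫₀^t ω₁∘⋯∘ω_r = ∫₀^t ω₁(s)·(∫₀^s ω₂∘⋯∘ω_r) ds`. -/
noncomputable def II : List (ℝ → ℂ) → ℝ → ℂ
  | [], _ => 1
  | (f :: fs), t => ∫ s in (0 : ℝ)..t, f s * II fs s

/-- The linear extension of the iterated integral to formal `ℂ`-linear
combinations of words. -/
noncomputable def IIlin (F : List (ℝ → ℂ) →₀ ℂ) (t : ℝ) : ℂ :=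
  F.sum fun w c => c * II w t

lemma II_nil (t : ℝ) : II [] t = 1 := rfl

lemma II_cons (f : ℝ → ℂ) (fs : List (ℝ → ℂ)) (t : ℝ) :
    II (f :: fs) t = ∫ s in (0 : ℝ)..t, f s * II fs s := rfl

/-- Continuity of the iterated integral. -/
lemma continuous_II : ∀ (w : List (ℝ → ℂ)), (∀ f ∈ w, Continuous f) → Continuous (II w)
  | [], _ => continuous_const
  | (f :: fs), h => by
    have hf : Continuous f := h f (by simp)
    have hfs : Continuous (II fs) := continuous_II fs fun g hg => h g (by simp [hg])
    have hcont : Continuous fun s => f s * II fs s := hf.mul hfs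
    have := intervalIntegral.continuous_primitive (μ := MeasureTheory.volume)
      (fun a b => hcont.intervalIntegrable a b) (0 : ℝ)
    convert this using 1; funext s; simp [II_cons]

/-- Derivative of the iterated integral. -/
lemma hasDerivAt_II (f : ℝ → ℂ) (fs : List (ℝ → ℂ))
    (h : ∀ g ∈ f :: fs, Continuous g) (t : ℝ) :
    HasDerivAt (II (f :: fs)) (f t * II fs t) t := by
  have hcont : Continuous fun s => f s * II fs s :=
    (h f (by simp)).mul (continuous_II fs fun g hg => h g (by simp [hg]))
  have := (intervalIntegral.integral_hasStrictDerivAt_right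
    (hcont.intervalIntegrable 0 t)
    (hcont.stronglyMeasurableAtFilter _ _) hcont.continuousAt).hasDerivAt
  exact this

/-- Elements of words in the support of a shuffle come from the original words. -/
lemma mem_of_mem_sh : ∀ (u v : List (ℝ → ℂ)) (w : List (ℝ → ℂ)),
    w ∈ (sh u v).support → ∀ f ∈ w, f ∈ u ++ v
  | [], v, w, hw, f, hf => by
    rw [sh] at hw
    have : w = v := by
      have := Finsupp.support_single_subset (a := v) (b := (1 : ℂ)) hw
      simpa using this
    subst this; simpa using hf
  | (a :: u), [], w, hw, f, hf => by
    rw [sh] at hw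
    have : w = a :: u := by
      have := Finsupp.support_single_subset (a := a :: u) (b := (1 : ℂ)) hw
      simpa using this
    subst this; simpa using hf
  | (a :: u), (b :: v), w, hw, f, hf => by
    classical
    rw [sh] at hw
    have hw' := Finsupp.support_add hw
    rcases Finset.mem_union.1 hw' with hw1 | hw1
    · have hmem := Finsupp.mapDomain_support hw1
      rcases Finset.mem_image.1 hmem with ⟨w', hws, rfl⟩
      rcases List.mem_cons.1 hf with rfl | hf'
      · simp
      · have := mem_of_mem_sh u (b :: v) w' hws f hf'
        simp only [List.mem_append, List.mem_cons] at this ⊢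
        tauto
    · have hmem := Finsupp.mapDomain_support hw1
      rcases Finset.mem_image.1 hmem with ⟨w', hws, rfl⟩
      rcases List.mem_cons.1 hf with rfl | hf'
      · simp
      · have := mem_of_mem_sh (a :: u) v w' hws f hf'
        simp only [List.mem_append, List.mem_cons] at this ⊢
        tauto
termination_by u v => u.length + v.length

lemma IIlin_add (F G : List (ℝ → ℂ) →₀ ℂ) (t : ℝ) :
    IIlin (F + G) t = IIlin F t + IIlin G t := by
  unfold IIlin
  exact Finsupp.sum_add_index' (fun w => zero_mul _) (fun w c₁ c₂ => add_mul _ _ _)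

lemma IIlin_single (w : List (ℝ → ℂ)) (t : ℝ) :
    IIlin (Finsupp.single w 1) t = II w t := by
  simp [IIlin, Finsupp.sum_single_index]

/-- Key step: integrating a one-form against a linear combination. -/
lemma IIlin_mapDomain (a : ℝ → ℂ) (ha : Continuous a) (F : List (ℝ → ℂ) →₀ ℂ)
    (hF : ∀ w ∈ F.support, ∀ f ∈ w, Continuous f) (t : ℝ) :
    IIlin (Finsupp.mapDomain (a :: ·) F) t = ∫ s in (0:ℝ)..t, a s * IIlin F s := by
  unfold IIlin
  have hint : ∀ w ∈ F.support, IntervalIntegrable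
      (fun s => F w * (a s * II w s)) MeasureTheory.volume 0 t := by
    intro w hw
    exact ((continuous_const.mul (ha.mul (continuous_II w (hF w hw)))).intervalIntegrable 0 t)
  calc ((Finsupp.mapDomain (a :: ·) F).sum fun w c => c * II w t)
      = F.sum fun w c => c * II (a :: w) t :=
        Finsupp.sum_mapDomain_index (fun w => zero_mul _) (fun w c₁ c₂ => add_mul _ _ _)
    _ = ∑ w ∈ F.support, ∫ s in (0:ℝ)..t, F w * (a s * II w s) := by
        rw [Finsupp.sum]
        refine Finset.sum_congr rfl fun w _ => ?_
        rw [II_cons, intervalIntegral.integral_const_mul]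
    _ = ∫ s in (0:ℝ)..t, ∑ w ∈ F.support, F w * (a s * II w s) := by
        rw [intervalIntegral.integral_finset_sum hint]
    _ = ∫ s in (0:ℝ)..t, a s * F.sum fun w c => c * II w s := by
        refine intervalIntegral.integral_congr fun s _ => ?_
        rw [Finsupp.sum, Finset.mul_sum]
        exact Finset.sum_congr rfl fun w _ => by ring

/-- The shuffle homomorphism property, proved by recursion on the words. -/
lemma key : ∀ (w₁ w₂ : List (ℝ → ℂ)),
    (∀ f ∈ w₁ ++ w₂, Continuous f) → ∀ t : ℝ,
    IIlin (sh w₁ w₂) t = II w₁ t * II w₂ t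
  | [], w₂, _, t => by rw [sh, IIlin_single, II_nil, one_mul]
  | (a :: u), [], _, t => by rw [sh, IIlin_single, II_nil, mul_one]
  | (a :: u), (b :: v), h, t => by
    have ha : Continuous a := h a (by simp)
    have hb : Continuous b := h b (by simp)
    have hu : ∀ f ∈ u ++ (b :: v), Continuous f := by
      intro f hf; apply h; simp only [List.mem_append, List.mem_cons] at hf ⊢; tauto
    have hv : ∀ f ∈ (a :: u) ++ v, Continuous f := by
      intro f hf; apply h; simp only [List.mem_append, List.mem_cons] at hf ⊢; tauto
    have ih1 : ∀ s, IIlin (sh u (b :: v)) s = II u s * II (b :: v) s := key u (b :: v) hu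
    have ih2 : ∀ s, IIlin (sh (a :: u) v) s = II (a :: u) s * II v s := key (a :: u) v hv
    rw [sh, IIlin_add]
    rw [IIlin_mapDomain a ha _ (fun w hw f hf => hu f (mem_of_mem_sh u (b :: v) w hw f hf))]
    rw [IIlin_mapDomain b hb _ (fun w hw f hf => hv f (mem_of_mem_sh (a :: u) v w hw f hf))]
    have hcu : Continuous (II u) := continuous_II u fun f hf => hu f (by simp [hf])
    have hcbv : Continuous (II (b :: v)) := continuous_II _ fun f hf => h f (by
      simp only [List.mem_append, List.mem_cons] at hf ⊢; tauto)
    have hcau : Continuous (II (a :: u)) := continuous_II _ fun f hf => h f (by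
      simp only [List.mem_append, List.mem_cons] at hf ⊢; tauto)
    have hcv : Continuous (II v) := continuous_II v fun f hf => hv f (by simp [hf])
    have e1 : (∫ s in (0:ℝ)..t, a s * IIlin (sh u (b :: v)) s)
        = ∫ s in (0:ℝ)..t, a s * (II u s * II (b :: v) s) :=
      intervalIntegral.integral_congr fun s _ => by rw [ih1]
    have e2 : (∫ s in (0:ℝ)..t, b s * IIlin (sh (a :: u) v) s)
        = ∫ s in (0:ℝ)..t, b s * (II (a :: u) s * II v s) :=
      intervalIntegral.integral_congr fun s _ => by rw [ih2]
    rw [e1, e2]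
    have hderiv : ∀ x ∈ Set.uIcc (0:ℝ) t,
        HasDerivAt (fun s => II (a :: u) s * II (b :: v) s)
          (a x * II u x * II (b :: v) x + II (a :: u) x * (b x * II v x)) x := by
      intro x _
      exact (hasDerivAt_II a u (fun g hg => h g (by
          simp only [List.mem_append, List.mem_cons] at hg ⊢; tauto)) x).mul
        (hasDerivAt_II b v (fun g hg => h g (by
          simp only [List.mem_append, List.mem_cons] at hg ⊢; tauto)) x)
    have hint : IntervalIntegrable
        (fun x => a x * II u x * II (b :: v) x + II (a :: u) x * (b x * II v x))
        MeasureTheory.volume 0 t :=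
      (((ha.mul hcu).mul hcbv).add (hcau.mul (hb.mul hcv))).intervalIntegrable 0 t
    have hftc := intervalIntegral.integral_eq_sub_of_hasDerivAt hderiv hint
    have h0 : II (a :: u) 0 * II (b :: v) 0 = 0 := by
      rw [II_cons, intervalIntegral.integral_same, zero_mul]
    rw [h0, sub_zero] at hftc
    rw [← hftc, ← intervalIntegral.integral_add
      (f := fun s => a s * (II u s * II (b :: v) s))
      (g := fun s => b s * (II (a :: u) s * II v s))
      ((ha.mul (hcu.mul hcbv)).intervalIntegrable 0 t)
      ((hb.mul (hcau.mul hcv)).intervalIntegrable 0 t)]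
    exact intervalIntegral.integral_congr fun s _ => by ring
termination_by w₁ w₂ => w₁.length + w₂.length

/-- the iterated integral is a shuffle homomorphism:
`∫ (w₁ ⧢ w₂) = (∫ w₁)·(∫ w₂)`. -/
theorem iteratedIntegral_shuffle (w₁ w₂ : List (ℝ → ℂ))
    (h : ∀ f ∈ w₁ ++ w₂, Continuous f) (t : ℝ) :
    IIlin (sh w₁ w₂) t = II w₁ t * II w₂ t :=
  key w₁ w₂ h t

end IterIntShuffle
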